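/- Let ρ be a d-dimensional density matrix, U a Haar-random d×d unitary, and measure m i.i.d. samples in the rotated basis {U†|i⟩⟨i|U}, so each outcome x_j has probability p_i(U) = ⟨i|UρU†|i⟩. The collision estimator g̃ = (1/m²) Σ_i (Σ_j 1{x_j = i})² − 1/m satisfies E[g̃] = (m−1)(1 + Tr(ρ²)) / (m(d+1)), where the expectation is over both the measurement outcomes and the Haar-random U. -/

import Mathlib

open MeasureTheory Matrix ComplexOrder

/-- Measurable-space structure on matrices (as functions). -/
noncomputable instance matrixMeasurableSpace (d : ℕ) : MeasurableSpace (Matrix (Fin d) (Fin d) ℂ) :=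
  inferInstanceAs (MeasurableSpace (Fin d → Fin d → ℂ))

namespace Stmt7Aux

variable {d : ℕ}

/-- The quadratic form of a matrix. -/
noncomputable def qf (M : Matrix (Fin d) (Fin d) ℂ) (v : Fin d → ℂ) : ℂ := star v ⬝ᵥ (M *ᵥ v)

/-- Vector supported at one coordinate. -/
def sv (a : Fin d) (x : ℂ) : Fin d → ℂ := fun i => if i = a then x else 0

/-- Vector supported at two coordinates. -/
def pv (a b : Fin d) (x y : ℂ) : Fin d → ℂ := fun i => if i = a then x else if i = b then y else 0

lemma qf_single (M : Matrix (Fin d) (Fin d) ℂ) (a : Fin d) (x : ℂ) :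
    qf M (sv a x) = starRingEnd ℂ x * x * M a a := by
  simp [qf, sv, dotProduct, mulVec, apply_ite, mul_ite, ite_mul, Finset.sum_ite_eq',
    mul_comm, mul_assoc, mul_left_comm]

lemma qf_basis (M : Matrix (Fin d) (Fin d) ℂ) (a : Fin d) : qf M (sv a 1) = M a a := by
  rw [qf_single]; simp

lemma qf_pair (M : Matrix (Fin d) (Fin d) ℂ) {a b : Fin d} (hab : a ≠ b) (x y : ℂ) :
    qf M (pv a b x y) =
      starRingEnd ℂ x * x * M a a + starRingEnd ℂ x * y * M a b
      + starRingEnd ℂ y * x * M b a + starRingEnd ℂ y * y * M b b := by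
  have inner : ∀ i, (∑ j, M i j * pv a b x y j) = M i a * x + M i b * y := by
    intro i
    rw [Finset.sum_eq_add_of_mem a b (Finset.mem_univ a) (Finset.mem_univ b) hab ?_]
    · have hba : b ≠ a := hab.symm
      simp [pv, hab, hba]
    · intro c _ hc
      simp [pv, hc.1, hc.2]
  show (∑ i, starRingEnd ℂ (pv a b x y i) * ∑ j, M i j * pv a b x y j) = _
  simp only [inner]
  rw [Finset.sum_eq_add_of_mem a b (Finset.mem_univ a) (Finset.mem_univ b) hab ?_]
  · have hba : b ≠ a := hab.symm
    simp [pv, hab, hba]; ring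
  · intro c _ hc
    simp [pv, hc.1, hc.2]

lemma psd_qf_nonneg {M : Matrix (Fin d) (Fin d) ℂ} (hM : M.PosSemidef) (v : Fin d → ℂ) :
    0 ≤ (qf M v).re ∧ (qf M v).im = 0 := by
  have := hM.dotProduct_mulVec_nonneg v
  rw [Complex.nonneg_iff] at this
  exact ⟨this.1, this.2.symm⟩

lemma diag_re_nonneg {M : Matrix (Fin d) (Fin d) ℂ} (hM : M.PosSemidef) (a : Fin d) :
    0 ≤ (M a a).re := by
  have h := (psd_qf_nonneg hM (sv a 1)).1
  rwa [qf_basis] at h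

lemma diag_eq_re {M : Matrix (Fin d) (Fin d) ℂ} (hM : M.PosSemidef) (a : Fin d) :
    M a a = ((M a a).re : ℂ) := (hM.1.coe_re_apply_self a).symm

lemma sum_diag_re {M : Matrix (Fin d) (Fin d) ℂ} (htr : M.trace = 1) :
    ∑ a, (M a a).re = 1 := by
  have : (M.trace).re = 1 := by rw [htr]; simp
  rwa [Matrix.trace, Complex.re_sum] at this

lemma diag_re_le_one {M : Matrix (Fin d) (Fin d) ℂ} (hM : M.PosSemidef) (htr : M.trace = 1)
    (a : Fin d) : (M a a).re ≤ 1 := by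
  rw [← sum_diag_re htr]
  exact Finset.single_le_sum (fun i _ => diag_re_nonneg hM i) (Finset.mem_univ a)

lemma pair_diag_re_le_one {M : Matrix (Fin d) (Fin d) ℂ} (hM : M.PosSemidef) (htr : M.trace = 1)
    {a b : Fin d} (hab : a ≠ b) : (M a a).re + (M b b).re ≤ 1 := by
  calc (M a a).re + (M b b).re = ∑ i ∈ ({a, b} : Finset (Fin d)), (M i i).re :=
        (Finset.sum_pair (f := fun i => (M i i).re) hab).symm
    _ ≤ ∑ i, (M i i).re := Finset.sum_le_sum_of_subset_of_nonneg (Finset.subset_univ _)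
        (fun i _ _ => diag_re_nonneg hM i)
    _ = 1 := sum_diag_re htr

lemma entry_abs_le_one {M : Matrix (Fin d) (Fin d) ℂ} (hM : M.PosSemidef) (htr : M.trace = 1)
    (a b : Fin d) : ‖M a b‖ ≤ 1 := by
  rcases eq_or_ne a b with rfl | hab
  · rw [diag_eq_re hM a, Complex.norm_real, Real.norm_eq_abs, abs_of_nonneg (diag_re_nonneg hM a)]
    exact diag_re_le_one hM htr a
  · rcases eq_or_ne (M a b) 0 with h0 | h0
    · simp [h0]
    set u := M a b with hu
    set t : ℂ := -(starRingEnd ℂ u) / (‖u‖ : ℂ) with ht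
    have habs : ((‖u‖ : ℝ) : ℂ) ≠ 0 := by
      simpa using (norm_ne_zero_iff.mpr h0)
    have hsq : ((Complex.normSq u : ℝ) : ℂ) = (‖u‖ : ℝ) * (‖u‖ : ℝ) := by
      rw [Complex.normSq_eq_norm_sq]; push_cast; ring
    have htu : t * u = -((‖u‖ : ℝ) : ℂ) := by
      rw [ht, div_mul_eq_mul_div, neg_mul, ← Complex.normSq_eq_conj_mul_self, hsq]
      field_simp
    have hba : M b a = starRingEnd ℂ u := by rw [← hM.1.apply b a]; rfl
    have hconj : starRingEnd ℂ t * M b a = -((‖u‖ : ℝ) : ℂ) := by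
      rw [hba, ← _root_.map_mul, htu, map_neg]
      simp [Complex.conj_ofReal]
    have hnt : starRingEnd ℂ t * t = 1 := by
      rw [← Complex.normSq_eq_conj_mul_self]
      have : Complex.normSq t = 1 := by
        rw [ht]
        simp only [Complex.normSq_div, Complex.normSq_neg, Complex.normSq_conj]
        have hane : ‖u‖ ≠ 0 := norm_ne_zero_iff.mpr h0
        rw [Complex.normSq_eq_norm_sq, Complex.normSq_ofReal, sq]
        field_simp
      rw [this]; norm_num
    have h := (psd_qf_nonneg hM (pv a b 1 t)).1
    rw [qf_pair M hab, _root_.map_one, one_mul, one_mul, one_mul, mul_one, htu, hconj, hnt,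
      one_mul] at h
    simp only [Complex.add_re, Complex.neg_re, Complex.ofReal_re] at h
    have hple := pair_diag_re_le_one hM htr hab
    linarith

/-! ### The collision-count combinatorics -/

lemma sum_prod_eval {d m : ℕ} (p : Fin d → ℝ) (hp : ∑ i, p i = 1) :
    ∑ xs : Fin m → Fin d, ∏ j, p (xs j) = 1 := by
  have h := Finset.prod_univ_sum (fun _ : Fin m => (Finset.univ : Finset (Fin d)))
    (fun _ x => p x)
  rw [Fintype.piFinset_univ] at h
  rw [← h]
  simp [hp]

lemma pair_marginal {d m : ℕ} (p : Fin d → ℝ) (hp : ∑ i, p i = 1) {j k : Fin m} (hjk : j ≠ k)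
    (i : Fin d) :
    ∑ xs : Fin m → Fin d, (∏ l, p (xs l)) * (if xs j = i then (1:ℝ) else 0)
      * (if xs k = i then (1:ℝ) else 0) = p i * p i := by
  set g : Fin m → Fin d → ℝ := fun l x =>
    p x * (if l = j then (if x = i then 1 else 0) else 1)
        * (if l = k then (if x = i then 1 else 0) else 1) with hg
  have hA : ∀ xs : Fin m → Fin d, ∏ l, g l (xs l)
      = (∏ l, p (xs l)) * (if xs j = i then (1:ℝ) else 0) * (if xs k = i then (1:ℝ) else 0) := by
    intro xs
    rw [hg]
    simp only [Finset.prod_mul_distrib]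
    congr 1
    · congr 1
      exact Finset.prod_ite_eq' Finset.univ j (fun l => if xs l = i then (1:ℝ) else 0) |>.trans
        (by simp)
    · exact Finset.prod_ite_eq' Finset.univ k (fun l => if xs l = i then (1:ℝ) else 0) |>.trans
        (by simp)
  have hB : ∀ l, ∑ x, g l x = if l = j then p i else if l = k then p i else 1 := by
    intro l
    rcases eq_or_ne l j with rfl | hlj
    · simp [hg, hjk, mul_ite, Finset.sum_ite_eq']
    · rcases eq_or_ne l k with rfl | hlk
      · simp [hg, hlj, mul_ite, Finset.sum_ite_eq']
      · simp [hg, hlj, hlk, hp]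
  have h := Finset.prod_univ_sum (fun _ : Fin m => (Finset.univ : Finset (Fin d))) g
  rw [Fintype.piFinset_univ] at h
  calc ∑ xs : Fin m → Fin d, (∏ l, p (xs l)) * (if xs j = i then (1:ℝ) else 0)
        * (if xs k = i then (1:ℝ) else 0)
      = ∑ xs : Fin m → Fin d, ∏ l, g l (xs l) := by
        exact (Finset.sum_congr rfl (fun xs _ => (hA xs))).symm
    _ = ∏ l, ∑ x, g l x := h.symm
    _ = ∏ l, (if l = j then p i else if l = k then p i else 1) := by
        exact Finset.prod_congr rfl (fun l _ => hB l)
    _ = p i * p i := by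
        rw [Finset.prod_eq_mul_of_mem j k (Finset.mem_univ j) (Finset.mem_univ k) hjk ?_]
        · simp [hjk, hjk.symm]
        · intro c _ hc
          simp [hc.1, hc.2]

lemma coincidence {d m : ℕ} (p : Fin d → ℝ) (hp : ∑ i, p i = 1) (j k : Fin m) :
    ∑ xs : Fin m → Fin d, (∏ l, p (xs l)) * (if xs j = xs k then (1:ℝ) else 0)
      = if j = k then 1 else ∑ i, p i ^ 2 := by
  rcases eq_or_ne j k with rfl | hjk
  · simp [sum_prod_eval p hp]
  · rw [if_neg hjk]
    have hsplit : ∀ xs : Fin m → Fin d, (if xs j = xs k then (1:ℝ) else 0)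
        = ∑ i, (if xs j = i then (1:ℝ) else 0) * (if xs k = i then (1:ℝ) else 0) := by
      intro xs
      rcases eq_or_ne (xs j) (xs k) with he | he
      · rw [if_pos he, he]
        simp [Finset.sum_ite_eq']
      · rw [if_neg he, eq_comm]
        apply Finset.sum_eq_zero
        intro i _
        rcases eq_or_ne (xs j) i with rfl | hi
        · simp [Ne.symm he]
        · simp [hi]
    calc ∑ xs : Fin m → Fin d, (∏ l, p (xs l)) * (if xs j = xs k then (1:ℝ) else 0)
        = ∑ xs : Fin m → Fin d, ∑ i, (∏ l, p (xs l)) * (if xs j = i then (1:ℝ) else 0)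
            * (if xs k = i then (1:ℝ) else 0) := by
          refine Finset.sum_congr rfl (fun xs _ => ?_)
          rw [hsplit xs, Finset.mul_sum]
          exact Finset.sum_congr rfl (fun i _ => by ring)
      _ = ∑ i, ∑ xs : Fin m → Fin d, (∏ l, p (xs l)) * (if xs j = i then (1:ℝ) else 0)
            * (if xs k = i then (1:ℝ) else 0) := Finset.sum_comm
      _ = ∑ i, p i * p i := Finset.sum_congr rfl (fun i _ => pair_marginal p hp hjk i)
      _ = ∑ i, p i ^ 2 := by simp [sq]

lemma delta_split {d m : ℕ} (xs : Fin m → Fin d) (j k : Fin m) :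
    (if xs j = xs k then (1:ℝ) else 0)
      = ∑ i, (if xs j = i then (1:ℝ) else 0) * (if xs k = i then (1:ℝ) else 0) := by
  rcases eq_or_ne (xs j) (xs k) with he | he
  · rw [if_pos he, he]
    simp [Finset.sum_ite_eq']
  · rw [if_neg he, eq_comm]
    apply Finset.sum_eq_zero
    intro i _
    rcases eq_or_ne (xs j) i with rfl | hi
    · simp [Ne.symm he]
    · simp [hi]

lemma square_count {d m : ℕ} (xs : Fin m → Fin d) :
    ∑ i, (∑ j, if xs j = i then (1:ℝ) else 0)^2
      = ∑ j, ∑ k, if xs j = xs k then (1:ℝ) else 0 := by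
  have h1 : ∀ i : Fin d, (∑ j, if xs j = i then (1:ℝ) else 0)^2
      = ∑ j, ∑ k, (if xs j = i then (1:ℝ) else 0) * (if xs k = i then (1:ℝ) else 0) := by
    intro i
    rw [sq, Finset.sum_mul_sum]
  calc ∑ i, (∑ j, if xs j = i then (1:ℝ) else 0)^2
      = ∑ i, ∑ j, ∑ k, (if xs j = i then (1:ℝ) else 0) * (if xs k = i then (1:ℝ) else 0) :=
        Finset.sum_congr rfl (fun i _ => h1 i)
    _ = ∑ j, ∑ i, ∑ k, (if xs j = i then (1:ℝ) else 0) * (if xs k = i then (1:ℝ) else 0) :=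
        Finset.sum_comm
    _ = ∑ j, ∑ k, ∑ i, (if xs j = i then (1:ℝ) else 0) * (if xs k = i then (1:ℝ) else 0) :=
        Finset.sum_congr rfl (fun j _ => Finset.sum_comm)
    _ = ∑ j, ∑ k, if xs j = xs k then (1:ℝ) else 0 :=
        Finset.sum_congr rfl (fun j _ => Finset.sum_congr rfl
          (fun k _ => (delta_split xs j k).symm))

lemma collision_sum {d m : ℕ} (hm : 1 ≤ m) (p : Fin d → ℝ) (hp : ∑ i, p i = 1) :
    ∑ xs : Fin m → Fin d, (∏ j, p (xs j)) *
      ((1:ℝ)/m^2 * ∑ i, (∑ j, if xs j = i then (1:ℝ) else 0)^2 - 1/m)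
    = ((m:ℝ)-1)/m * ∑ i, p i ^ 2 := by
  have hm0 : (m:ℝ) ≠ 0 := by positivity
  set S := ∑ i, p i ^ 2 with hS
  have key : ∑ xs : Fin m → Fin d, (∏ l, p (xs l)) *
      (∑ j, ∑ k, if xs j = xs k then (1:ℝ) else 0) = m + (m^2 - m) * S := by
    calc ∑ xs : Fin m → Fin d, (∏ l, p (xs l)) * (∑ j, ∑ k, if xs j = xs k then (1:ℝ) else 0)
        = ∑ xs : Fin m → Fin d, ∑ j, ∑ k, (∏ l, p (xs l)) * (if xs j = xs k then (1:ℝ) else 0) := by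
          refine Finset.sum_congr rfl (fun xs _ => ?_)
          rw [Finset.mul_sum]
          exact Finset.sum_congr rfl (fun j _ => Finset.mul_sum _ _ _)
      _ = ∑ j, ∑ k : Fin m, ∑ xs : Fin m → Fin d,
            (∏ l, p (xs l)) * (if xs j = xs k then (1:ℝ) else 0) := by
          rw [Finset.sum_comm]
          exact Finset.sum_congr rfl (fun j _ => Finset.sum_comm)
      _ = ∑ j, ∑ k : Fin m, (if j = k then (1:ℝ) else S) :=
          Finset.sum_congr rfl (fun j _ => Finset.sum_congr rfl
            (fun k _ => coincidence p hp j k))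
      _ = ∑ j : Fin m, ((m:ℝ) * S + (1 - S)) := by
          refine Finset.sum_congr rfl (fun j _ => ?_)
          have : ∀ k : Fin m, (if j = k then (1:ℝ) else S) = S + (if j = k then 1 - S else 0) := by
            intro k; split_ifs <;> ring
          simp only [this, Finset.sum_add_distrib, Finset.sum_const, Finset.card_univ,
            Fintype.card_fin, nsmul_eq_mul, Finset.sum_ite_eq, Finset.mem_univ, if_pos]
      _ = m + (m^2 - m) * S := by
          rw [Finset.sum_const, Finset.card_univ, Fintype.card_fin, nsmul_eq_mul]
          ring
  calc ∑ xs : Fin m → Fin d, (∏ j, p (xs j)) *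
        ((1:ℝ)/m^2 * ∑ i, (∑ j, if xs j = i then (1:ℝ) else 0)^2 - 1/m)
      = ∑ xs : Fin m → Fin d, ((1:ℝ)/m^2 * ((∏ l, p (xs l)) *
          (∑ j, ∑ k, if xs j = xs k then (1:ℝ) else 0)) - 1/m * (∏ l, p (xs l))) := by
        refine Finset.sum_congr rfl (fun xs _ => ?_)
        rw [square_count xs]
        ring
    _ = (1:ℝ)/m^2 * (m + (m^2 - m) * S) - 1/m * 1 := by
        rw [Finset.sum_sub_distrib, ← Finset.mul_sum, ← Finset.mul_sum, key,
          sum_prod_eval p hp]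
    _ = ((m:ℝ)-1)/m * S := by field_simp; ring


/-! ### The rotated density matrix -/

/-- The rotated density matrix `U ρ U†`. -/
noncomputable def Bm (ρ : Matrix (Fin d) (Fin d) ℂ) (U : Matrix.unitaryGroup (Fin d) ℂ) :
    Matrix (Fin d) (Fin d) ℂ :=
  (U : Matrix (Fin d) (Fin d) ℂ) * ρ * (U : Matrix (Fin d) (Fin d) ℂ)ᴴ

lemma unitary_ct_mul {U : Matrix.unitaryGroup (Fin d) ℂ} :
    (U : Matrix (Fin d) (Fin d) ℂ)ᴴ * (U : Matrix (Fin d) (Fin d) ℂ) = 1 := by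
  have h := Matrix.mem_unitaryGroup_iff'.mp U.2
  rwa [Matrix.star_eq_conjTranspose] at h

lemma Bm_psd {ρ : Matrix (Fin d) (Fin d) ℂ} (hρ : ρ.PosSemidef)
    (U : Matrix.unitaryGroup (Fin d) ℂ) : (Bm ρ U).PosSemidef :=
  hρ.mul_mul_conjTranspose_same _

lemma Bm_trace {ρ : Matrix (Fin d) (Fin d) ℂ} (htr : ρ.trace = 1)
    (U : Matrix.unitaryGroup (Fin d) ℂ) : (Bm ρ U).trace = 1 := by
  rw [Bm, Matrix.trace_mul_comm, ← Matrix.mul_assoc, unitary_ct_mul, Matrix.one_mul, htr]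

lemma Bm_sq {ρ : Matrix (Fin d) (Fin d) ℂ} (U : Matrix.unitaryGroup (Fin d) ℂ) :
    Bm ρ U * Bm ρ U = (U : Matrix (Fin d) (Fin d) ℂ) * (ρ * ρ)
      * (U : Matrix (Fin d) (Fin d) ℂ)ᴴ := by
  rw [Bm]
  calc (↑U * ρ * (↑U)ᴴ) * (↑U * ρ * (↑U)ᴴ)
      = ↑U * ρ * (((↑U)ᴴ * ↑U) * (ρ * (↑U)ᴴ)) := by
        simp only [Matrix.mul_assoc]
    _ = ↑U * (ρ * ρ) * (↑U)ᴴ := by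
        rw [unitary_ct_mul, Matrix.one_mul]
        simp only [Matrix.mul_assoc]

lemma Bm_sq_trace {ρ : Matrix (Fin d) (Fin d) ℂ} (U : Matrix.unitaryGroup (Fin d) ℂ) :
    (Bm ρ U * Bm ρ U).trace = (ρ * ρ).trace := by
  rw [Bm_sq, Matrix.trace_mul_comm, ← Matrix.mul_assoc, unitary_ct_mul, Matrix.one_mul]

lemma Bm_mul_left (ρ : Matrix (Fin d) (Fin d) ℂ) (V U : Matrix.unitaryGroup (Fin d) ℂ) :
    Bm ρ (V * U) = (V : Matrix (Fin d) (Fin d) ℂ) * Bm ρ U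
      * (V : Matrix (Fin d) (Fin d) ℂ)ᴴ := by
  have hco : ((V * U : Matrix.unitaryGroup (Fin d) ℂ) : Matrix (Fin d) (Fin d) ℂ)
      = (V : Matrix (Fin d) (Fin d) ℂ) * (U : Matrix (Fin d) (Fin d) ℂ) := rfl
  rw [Bm, Bm, hco, Matrix.conjTranspose_mul]
  simp only [Matrix.mul_assoc]

lemma qf_conj (M V : Matrix (Fin d) (Fin d) ℂ) (v : Fin d → ℂ) :
    qf (V * M * Vᴴ) v = qf M (Vᴴ *ᵥ v) := by
  rw [qf, qf]
  rw [show (V * M * Vᴴ) *ᵥ v = V *ᵥ (M *ᵥ (Vᴴ *ᵥ v)) by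
    rw [Matrix.mulVec_mulVec, Matrix.mulVec_mulVec]]
  rw [Matrix.dotProduct_mulVec, Matrix.star_mulVec, Matrix.conjTranspose_conjTranspose]

/-! ### Measurability and integrability -/

lemma measurable_entry (a b : Fin d) :
    Measurable (fun U : Matrix.unitaryGroup (Fin d) ℂ => (U : Matrix (Fin d) (Fin d) ℂ) a b) := by
  have h1 : Measurable (fun U : Matrix.unitaryGroup (Fin d) ℂ =>
      (U : Matrix (Fin d) (Fin d) ℂ)) := measurable_subtype_coe
  exact (measurable_pi_apply b).comp ((measurable_pi_apply a).comp h1)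

lemma measurable_Bm_entry (ρ : Matrix (Fin d) (Fin d) ℂ) (a b : Fin d) :
    Measurable (fun U : Matrix.unitaryGroup (Fin d) ℂ => Bm ρ U a b) := by
  simp only [Bm, Matrix.mul_apply, Matrix.conjTranspose_apply]
  apply Finset.measurable_sum
  intro k _
  apply Measurable.mul
  · apply Finset.measurable_sum
    intro l _
    exact (measurable_entry a l).mul measurable_const
  · exact continuous_star.measurable.comp (measurable_entry b k)

lemma measurable_Q (ρ : Matrix (Fin d) (Fin d) ℂ) (v : Fin d → ℂ) :
    Measurable (fun U : Matrix.unitaryGroup (Fin d) ℂ => (qf (Bm ρ U) v).re ^ 2) := by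
  have h : ∀ U : Matrix.unitaryGroup (Fin d) ℂ,
      qf (Bm ρ U) v = ∑ a, star (v a) * ∑ b, Bm ρ U a b * v b := fun U => rfl
  simp only [h]
  apply Measurable.pow_const
  apply Complex.measurable_re.comp
  apply Finset.measurable_sum
  intro a _
  apply Measurable.const_mul
  apply Finset.measurable_sum
  intro b _
  exact (measurable_Bm_entry ρ a b).mul measurable_const

lemma qf_re_abs_le {M : Matrix (Fin d) (Fin d) ℂ} (hM : M.PosSemidef) (htr : M.trace = 1)
    (v : Fin d → ℂ) :
    |(qf M v).re| ≤ (∑ a, ‖v a‖) * (∑ a, ‖v a‖) := by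
  have h1 : |(qf M v).re| ≤ ‖qf M v‖ := Complex.abs_re_le_norm _
  refine h1.trans ?_
  have h2 : qf M v = ∑ a, star (v a) * ∑ b, M a b * v b := rfl
  rw [h2]
  refine (norm_sum_le _ _).trans ?_
  rw [Finset.sum_mul]
  refine Finset.sum_le_sum (fun a _ => ?_)
  rw [norm_mul]
  have hsa : ‖star (v a)‖ = ‖v a‖ := norm_star _
  rw [hsa]
  refine mul_le_mul_of_nonneg_left ?_ (norm_nonneg _)
  refine (norm_sum_le _ _).trans ?_
  refine Finset.sum_le_sum (fun b _ => ?_)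
  rw [norm_mul]
  calc ‖M a b‖ * ‖v b‖
      ≤ 1 * ‖v b‖ :=
        mul_le_mul_of_nonneg_right (entry_abs_le_one hM htr a b) (norm_nonneg _)
    _ = ‖v b‖ := one_mul _

lemma integrable_Q {ρ : Matrix (Fin d) (Fin d) ℂ} (hρ : ρ.PosSemidef) (htr : ρ.trace = 1)
    (ν : Measure (Matrix.unitaryGroup (Fin d) ℂ)) [IsProbabilityMeasure ν] (v : Fin d → ℂ) :
    Integrable (fun U : Matrix.unitaryGroup (Fin d) ℂ => (qf (Bm ρ U) v).re ^ 2) ν := by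
  refine (integrable_const (((∑ a, ‖v a‖) * (∑ a, ‖v a‖))^2)).mono'
    (measurable_Q ρ v).aestronglyMeasurable (ae_of_all _ (fun U => ?_))
  rw [Real.norm_eq_abs, abs_pow, ← sq_abs]
  have hb := qf_re_abs_le (Bm_psd hρ U) (Bm_trace htr U) v
  have h0 : (0:ℝ) ≤ |(qf (Bm ρ U) v).re| := abs_nonneg _
  exact pow_le_pow_left₀ (abs_nonneg _) (by simpa using hb) 2


/-! ### Left invariance -/

lemma measurable_mulLeft (V : Matrix.unitaryGroup (Fin d) ℂ) :
    Measurable (fun U : Matrix.unitaryGroup (Fin d) ℂ => V * U) := by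
  refine Measurable.subtype_mk ?_
  show Measurable fun U : Matrix.unitaryGroup (Fin d) ℂ =>
    (V : Matrix (Fin d) (Fin d) ℂ) * (U : Matrix (Fin d) (Fin d) ℂ)
  refine measurable_pi_lambda _ (fun a => measurable_pi_lambda _ (fun b => ?_))
  show Measurable fun U : Matrix.unitaryGroup (Fin d) ℂ =>
    ((V : Matrix (Fin d) (Fin d) ℂ) * (U : Matrix (Fin d) (Fin d) ℂ)) a b
  simp only [Matrix.mul_apply]
  exact Finset.measurable_sum _ (fun k _ => (measurable_entry k b).const_mul _)

lemma int_Q_inv {ρ : Matrix (Fin d) (Fin d) ℂ}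
    {ν : Measure (Matrix.unitaryGroup (Fin d) ℂ)} [IsProbabilityMeasure ν]
    (hinv : ∀ V : Matrix.unitaryGroup (Fin d) ℂ, ν.map (fun U => V * U) = ν)
    (V : Matrix.unitaryGroup (Fin d) ℂ) (v : Fin d → ℂ) :
    ∫ U, (qf (Bm ρ U) v).re ^ 2 ∂ν
      = ∫ U, (qf (Bm ρ U) ((V : Matrix (Fin d) (Fin d) ℂ)ᴴ *ᵥ v)).re ^ 2 ∂ν := by
  conv_lhs => rw [← hinv V]
  rw [integral_map (measurable_mulLeft V).aemeasurable (measurable_Q ρ v).aestronglyMeasurable]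
  refine integral_congr_ae (ae_of_all _ (fun U => ?_))
  show (qf (Bm ρ (V * U)) v).re ^ 2 = (qf (Bm ρ U) ((V : Matrix (Fin d) (Fin d) ℂ)ᴴ *ᵥ v)).re ^ 2
  rw [Bm_mul_left, qf_conj]

/-- Any unit vector is the (conjugated) distinguished row of some unitary matrix. -/
lemma exists_unitary_row (hd : 0 < d) (v : Fin d → ℂ)
    (hv : ∑ a, Complex.normSq (v a) = 1) :
    ∃ V : Matrix.unitaryGroup (Fin d) ℂ,
      ∀ b, (V : Matrix (Fin d) (Fin d) ℂ) ⟨0, hd⟩ b = starRingEnd ℂ (v b) := by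
  classical
  set i0 : Fin d := ⟨0, hd⟩
  set w : EuclideanSpace ℂ (Fin d) :=
    (WithLp.equiv 2 (Fin d → ℂ)).symm (fun a => starRingEnd ℂ (v a)) with hw
  have hwa : ∀ a, w a = starRingEnd ℂ (v a) := fun a => rfl
  have hnorm : inner ℂ w w = 1 := by
    rw [PiLp.inner_apply]
    have : ∀ a, inner ℂ (w a) (w a) = (Complex.normSq (v a) : ℂ) := by
      intro a
      rw [RCLike.inner_apply', hwa]
      rw [← Complex.normSq_eq_conj_mul_self, Complex.normSq_conj]
    rw [Finset.sum_congr rfl (fun a _ => this a)]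
    norm_cast
  have hcard : Module.finrank ℂ (EuclideanSpace ℂ (Fin d)) = Fintype.card (Fin d) := by
    simp [finrank_euclideanSpace]
  have horth : Orthonormal ℂ (Set.restrict {i0} (fun _ : Fin d => w)) := by
    rw [orthonormal_iff_ite]
    intro i j
    have hij : i = j := Subtype.ext (by
      have hi := i.2; have hj := j.2
      simp only [Set.mem_singleton_iff] at hi hj
      rw [hi, hj])
    subst hij
    rw [if_pos rfl]; exact hnorm
  obtain ⟨bas, hbas⟩ := horth.exists_orthonormalBasis_extension_of_card_eq hcard
  set V0 : Matrix (Fin d) (Fin d) ℂ := fun r c => (bas r : EuclideanSpace ℂ (Fin d)) c with hV0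
  have hmem : V0 ∈ Matrix.unitaryGroup (Fin d) ℂ := by
    rw [Matrix.mem_unitaryGroup_iff]
    ext r s
    rw [Matrix.mul_apply, Matrix.one_apply]
    have : ∀ b, V0 r b * (star V0) b s = star ((bas s : EuclideanSpace ℂ (Fin d)) b)
        * (bas r : EuclideanSpace ℂ (Fin d)) b := by
      intro b
      rw [Matrix.star_apply, hV0]
      ring
    rw [Finset.sum_congr rfl (fun b _ => this b)]
    have h2 := orthonormal_iff_ite.mp bas.orthonormal s r
    rw [PiLp.inner_apply] at h2
    simp only [RCLike.inner_apply'] at h2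
    have h3 : (∑ b, star ((bas s : EuclideanSpace ℂ (Fin d)) b)
        * (bas r : EuclideanSpace ℂ (Fin d)) b) = if s = r then 1 else 0 := h2
    rw [h3]
    by_cases h : r = s
    · simp [h]
    · have hs : ¬ s = r := fun hh => h hh.symm
      simp [h, hs]
  refine ⟨⟨V0, hmem⟩, fun b => ?_⟩
  have hb : bas i0 = w := hbas i0 (Set.mem_singleton _)
  show (bas i0 : EuclideanSpace ℂ (Fin d)) b = starRingEnd ℂ (v b)
  rw [hb, hwa]

lemma sv_unit (a : Fin d) : ∑ x, Complex.normSq (sv a (1:ℂ) x) = 1 := by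
  simp [sv, apply_ite, Finset.sum_ite_eq']

lemma int_Q_unit {ρ : Matrix (Fin d) (Fin d) ℂ}
    {ν : Measure (Matrix.unitaryGroup (Fin d) ℂ)} [IsProbabilityMeasure ν] (hd : 0 < d)
    (hinv : ∀ V : Matrix.unitaryGroup (Fin d) ℂ, ν.map (fun U => V * U) = ν)
    (v : Fin d → ℂ) (hv : ∑ a, Complex.normSq (v a) = 1) :
    ∫ U, (qf (Bm ρ U) v).re ^ 2 ∂ν
      = ∫ U, (qf (Bm ρ U) (sv (⟨0, hd⟩ : Fin d) 1)).re ^ 2 ∂ν := by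
  obtain ⟨V, hV⟩ := exists_unitary_row hd v hv
  have hvec : (V : Matrix (Fin d) (Fin d) ℂ)ᴴ *ᵥ (sv (⟨0, hd⟩ : Fin d) 1) = v := by
    funext b
    rw [Matrix.mulVec]
    show (∑ c, (V : Matrix (Fin d) (Fin d) ℂ)ᴴ b c * sv (⟨0, hd⟩ : Fin d) 1 c) = v b
    rw [Finset.sum_congr rfl (fun c _ => by
      rw [show sv (⟨0, hd⟩ : Fin d) (1:ℂ) c = if c = ⟨0, hd⟩ then 1 else 0 from rfl, mul_ite,
        mul_one, mul_zero])]
    rw [Finset.sum_ite_eq' Finset.univ (⟨0, hd⟩ : Fin d) _]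
    simp only [Finset.mem_univ, if_pos]
    rw [Matrix.conjTranspose_apply, hV b]
    simp [Complex.star_def]
  rw [← hvec]
  exact (int_Q_inv hinv V (sv (⟨0, hd⟩ : Fin d) 1)).symm


/-! ### The four-point identity -/

lemma pv_normSq_sum {a b : Fin d} (hab : a ≠ b) (x y : ℂ) :
    ∑ i, Complex.normSq (pv a b x y i) = Complex.normSq x + Complex.normSq y := by
  rw [Finset.sum_eq_add_of_mem a b (Finset.mem_univ a) (Finset.mem_univ b) hab ?_]
  · have hba : b ≠ a := hab.symm
    simp [pv, hab, hba]
  · intro c _ hc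
    simp [pv, hc.1, hc.2]

lemma qf_pair_re {M : Matrix (Fin d) (Fin d) ℂ} (hM : M.PosSemidef) {a b : Fin d} (hab : a ≠ b)
    (u w : ℂ) :
    (qf M (pv a b u w)).re = Complex.normSq u * (M a a).re + Complex.normSq w * (M b b).re
      + 2 * ((starRingEnd ℂ u * w) * M a b).re := by
  have hba : M b a = starRingEnd ℂ (M a b) := by rw [← hM.1.apply b a]; rfl
  have h3 : starRingEnd ℂ w * u * M b a
      = starRingEnd ℂ (starRingEnd ℂ u * w * M a b) := by
    rw [hba]
    simp only [_root_.map_mul, Complex.conj_conj]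
    ring
  rw [qf_pair M hab, h3]
  rw [show starRingEnd ℂ u * u * M a a = ((Complex.normSq u : ℝ) : ℂ) * M a a by
    rw [← Complex.normSq_eq_conj_mul_self]]
  rw [show starRingEnd ℂ w * w * M b b = ((Complex.normSq w : ℝ) : ℂ) * M b b by
    rw [← Complex.normSq_eq_conj_mul_self]]
  simp only [Complex.add_re, Complex.conj_re, Complex.re_ofReal_mul]
  ring

lemma four_point {M : Matrix (Fin d) (Fin d) ℂ} (hM : M.PosSemidef) {a b : Fin d} (hab : a ≠ b) :
    (qf M (pv a b (((Real.sqrt 2)⁻¹ : ℝ) : ℂ) (((Real.sqrt 2)⁻¹ : ℝ) : ℂ))).re ^ 2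
    + (qf M (pv a b (((Real.sqrt 2)⁻¹ : ℝ) : ℂ) (-(((Real.sqrt 2)⁻¹ : ℝ) : ℂ)))).re ^ 2
    + (qf M (pv a b (((Real.sqrt 2)⁻¹ : ℝ) : ℂ)
        ((((Real.sqrt 2)⁻¹ : ℝ) : ℂ) * Complex.I))).re ^ 2
    + (qf M (pv a b (((Real.sqrt 2)⁻¹ : ℝ) : ℂ)
        (-((((Real.sqrt 2)⁻¹ : ℝ) : ℂ) * Complex.I)))).re ^ 2
    = ((M a a).re + (M b b).re) ^ 2 + 2 * Complex.normSq (M a b) := by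
  set r : ℝ := (Real.sqrt 2)⁻¹ with hrdef
  have hr : r * r = 1/2 := by
    rw [hrdef, ← mul_inv, Real.mul_self_sqrt (by norm_num)]
    norm_num
  have hns : Complex.normSq ((r : ℝ) : ℂ) = 1/2 := by
    rw [Complex.normSq_ofReal, hr]
  have hcu : starRingEnd ℂ ((r : ℝ) : ℂ) = ((r : ℝ) : ℂ) := Complex.conj_ofReal r
  have hrr : ((r : ℝ) : ℂ) * ((r : ℝ) : ℂ) = (((1:ℝ)/2 : ℝ) : ℂ) := by
    rw [← Complex.ofReal_mul, hr]
  have e1 := qf_pair_re hM hab ((r : ℝ) : ℂ) ((r : ℝ) : ℂ)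
  have e2 := qf_pair_re hM hab ((r : ℝ) : ℂ) (-((r : ℝ) : ℂ))
  have e3 := qf_pair_re hM hab ((r : ℝ) : ℂ) (((r : ℝ) : ℂ) * Complex.I)
  have e4 := qf_pair_re hM hab ((r : ℝ) : ℂ) (-(((r : ℝ) : ℂ) * Complex.I))
  rw [hcu, hns] at e1 e2 e3 e4
  rw [hrr, Complex.re_ofReal_mul] at e1
  rw [Complex.normSq_neg, hns, mul_neg, hrr, neg_mul, Complex.neg_re,
    Complex.re_ofReal_mul] at e2
  rw [Complex.normSq_mul, hns, Complex.normSq_I, mul_one,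
    show ((r:ℂ)) * (((r:ℝ):ℂ) * Complex.I) * M a b
      = (((1:ℝ)/2 : ℝ) : ℂ) * (Complex.I * M a b) from by rw [← hrr]; ring,
    Complex.re_ofReal_mul, Complex.I_mul_re] at e3
  rw [Complex.normSq_neg, Complex.normSq_mul, hns, Complex.normSq_I, mul_one,
    show ((r:ℂ)) * (-(((r:ℝ):ℂ) * Complex.I)) * M a b
      = -((((1:ℝ)/2 : ℝ) : ℂ) * (Complex.I * M a b)) from by rw [← hrr]; ring,
    Complex.neg_re, Complex.re_ofReal_mul, Complex.I_mul_re] at e4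
  rw [e1, e2, e3, e4, Complex.normSq_apply]
  ring

lemma trace_sq_re {M : Matrix (Fin d) (Fin d) ℂ} (hM : M.PosSemidef) :
    ((M * M).trace).re = ∑ a, ∑ b, Complex.normSq (M a b) := by
  have h : (M * M).trace = ∑ a, ∑ b, ((Complex.normSq (M a b) : ℝ) : ℂ) := by
    rw [Matrix.trace]
    refine Finset.sum_congr rfl (fun a _ => ?_)
    rw [Matrix.diag_apply, Matrix.mul_apply]
    refine Finset.sum_congr rfl (fun b _ => ?_)
    have hba : M b a = starRingEnd ℂ (M a b) := by rw [← hM.1.apply b a]; rfl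
    rw [hba, Complex.mul_conj]
  rw [h, Complex.re_sum]
  refine Finset.sum_congr rfl (fun a _ => ?_)
  rw [Complex.re_sum]
  simp

lemma offdiag_identity {M : Matrix (Fin d) (Fin d) ℂ} (hM : M.PosSemidef) (htrM : M.trace = 1) :
    ∑ ab ∈ (Finset.univ : Finset (Fin d)).offDiag,
      (((M ab.1 ab.1).re + (M ab.2 ab.2).re) ^ 2 + 2 * Complex.normSq (M ab.1 ab.2))
    = 2 * ((d:ℝ) - 3) * (∑ a, (M a a).re ^ 2) + 2 + 2 * ((M * M).trace).re := by
  set f : Fin d × Fin d → ℝ := fun ab =>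
    ((M ab.1 ab.1).re + (M ab.2 ab.2).re) ^ 2 + 2 * Complex.normSq (M ab.1 ab.2) with hf
  set S := ∑ a, (M a a).re ^ 2 with hS
  have hp1 : ∑ a, (M a a).re = 1 := sum_diag_re htrM
  have hdiagsum : ∑ ab ∈ (Finset.univ : Finset (Fin d)).diag, f ab = 6 * S := by
    rw [Finset.sum_diag]
    have h6 : ∀ a : Fin d, f (a, a) = 6 * (M a a).re ^ 2 := by
      intro a
      rw [hf]
      have him : (M a a).im = 0 := by
        have h := hM.1.apply a a
        rw [Complex.star_def, Complex.conj_eq_iff_im] at h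
        exact h
      have hnn : Complex.normSq (M a a) = (M a a).re ^ 2 := by
        rw [Complex.normSq_apply, him]
        ring
      simp only [hnn]
      ring
    rw [Finset.sum_congr rfl (fun a _ => h6 a), ← Finset.mul_sum]
  have hfullsum : ∑ ab ∈ (Finset.univ : Finset (Fin d)) ×ˢ (Finset.univ : Finset (Fin d)), f ab
      = 2 * (d:ℝ) * S + 2 + 2 * ((M * M).trace).re := by
    rw [Finset.sum_product]
    have hb : ∀ a : Fin d, ∑ b, f (a, b)
        = ((d:ℝ) * (M a a).re ^ 2 + 2 * (M a a).re + S)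
          + 2 * ∑ b, Complex.normSq (M a b) := by
      intro a
      rw [hf]
      simp only []
      rw [Finset.sum_add_distrib]
      congr 1
      · have hexp : ∀ b : Fin d, ((M a a).re + (M b b).re) ^ 2
            = (M a a).re ^ 2 + 2 * (M a a).re * (M b b).re + (M b b).re ^ 2 := fun b => by ring
        rw [Finset.sum_congr rfl (fun b _ => hexp b), Finset.sum_add_distrib,
          Finset.sum_add_distrib, Finset.sum_const, Finset.card_univ, Fintype.card_fin,
          ← Finset.mul_sum, hp1, ← hS, nsmul_eq_mul]
        ring
      · rw [← Finset.mul_sum]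
    rw [Finset.sum_congr rfl (fun a _ => hb a), Finset.sum_add_distrib, Finset.sum_add_distrib,
      Finset.sum_add_distrib, Finset.sum_const, Finset.card_univ, Fintype.card_fin,
      nsmul_eq_mul]
    have h1 : ∑ a : Fin d, (d:ℝ) * (M a a).re ^ 2 = (d:ℝ) * S := by
      rw [← Finset.mul_sum, ← hS]
    have h2 : ∑ a : Fin d, 2 * (M a a).re = 2 := by
      rw [← Finset.mul_sum, hp1, mul_one]
    have h3 : ∑ a : Fin d, 2 * ∑ b, Complex.normSq (M a b) = 2 * ((M * M).trace).re := by
      rw [← Finset.mul_sum, trace_sq_re hM]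
    rw [h1, h2, h3]
    ring
  have hsplit : (∑ ab ∈ (Finset.univ : Finset (Fin d)).diag, f ab)
      + (∑ ab ∈ (Finset.univ : Finset (Fin d)).offDiag, f ab)
      = ∑ ab ∈ (Finset.univ : Finset (Fin d)) ×ˢ (Finset.univ : Finset (Fin d)), f ab := by
    rw [← Finset.sum_union (Finset.disjoint_diag_offDiag _), Finset.diag_union_offDiag]
  rw [hdiagsum, hfullsum] at hsplit
  linear_combination hsplit

lemma key (hd : 0 < d) (ν : Measure (Matrix.unitaryGroup (Fin d) ℂ)) [IsProbabilityMeasure ν]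
    (hinv : ∀ V : Matrix.unitaryGroup (Fin d) ℂ, ν.map (fun U => V * U) = ν)
    {ρ : Matrix (Fin d) (Fin d) ℂ} (hρ : ρ.PosSemidef) (htr : ρ.trace = 1) :
    ∫ U, (∑ a, ((Bm ρ U) a a).re ^ 2) ∂ν = (1 + ((ρ * ρ).trace).re) / ((d:ℝ) + 1) := by
  classical
  set t : ℝ := ((ρ * ρ).trace).re with htdef
  set c : ℝ := ∫ U, (qf (Bm ρ U) (sv (⟨0, hd⟩ : Fin d) 1)).re ^ 2 ∂ν with hc
  have hQ : ∀ v : Fin d → ℂ, (∑ a, Complex.normSq (v a)) = 1 →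
      ∫ U, (qf (Bm ρ U) v).re ^ 2 ∂ν = c := fun v hv => int_Q_unit hd hinv v hv
  have hsva : ∀ a : Fin d, ∫ U, (qf (Bm ρ U) (sv a 1)).re ^ 2 ∂ν = c :=
    fun a => hQ _ (sv_unit a)
  have hSint : ∫ U, (∑ a, ((Bm ρ U) a a).re ^ 2) ∂ν = (d:ℝ) * c := by
    have hrw : (fun U => ∑ a, ((Bm ρ U) a a).re ^ 2)
        = fun U => ∑ a, (qf (Bm ρ U) (sv a 1)).re ^ 2 :=
      funext fun U => Finset.sum_congr rfl fun a _ => by rw [qf_basis]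
    rw [hrw, integral_finset_sum _ (fun a _ => integrable_Q hρ htr ν _)]
    rw [Finset.sum_congr rfl (fun a _ => hsva a), Finset.sum_const, Finset.card_univ,
      Fintype.card_fin, nsmul_eq_mul]
  set r : ℝ := (Real.sqrt 2)⁻¹ with hrdef
  have hr : r * r = 1/2 := by
    rw [hrdef, ← mul_inv, Real.mul_self_sqrt (by norm_num)]
    norm_num
  have hnsr : Complex.normSq ((r : ℝ) : ℂ) = 1/2 := by rw [Complex.normSq_ofReal, hr]
  -- the four unit vectors attached to an off-diagonal pair
  set w1 : ℂ := ((r : ℝ) : ℂ)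
  set w2 : ℂ := -((r : ℝ) : ℂ)
  set w3 : ℂ := ((r : ℝ) : ℂ) * Complex.I
  set w4 : ℂ := -(((r : ℝ) : ℂ) * Complex.I)
  have hns1 : Complex.normSq w1 = 1/2 := hnsr
  have hns2 : Complex.normSq w2 = 1/2 := by rw [show w2 = -w1 from rfl, Complex.normSq_neg]; exact hns1
  have hns3 : Complex.normSq w3 = 1/2 := by
    rw [show w3 = w1 * Complex.I from rfl, Complex.normSq_mul, Complex.normSq_I, mul_one]; exact hns1
  have hns4 : Complex.normSq w4 = 1/2 := by
    rw [show w4 = -w3 from rfl, Complex.normSq_neg]; exact hns3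
  have hFint : ∀ ab ∈ (Finset.univ : Finset (Fin d)).offDiag,
      ∫ U, ((((Bm ρ U) ab.1 ab.1).re + ((Bm ρ U) ab.2 ab.2).re) ^ 2
        + 2 * Complex.normSq ((Bm ρ U) ab.1 ab.2)) ∂ν = 4 * c := by
    intro ab hab
    have habne : ab.1 ≠ ab.2 := (Finset.mem_offDiag.mp hab).2.2
    have hpt : ∀ U : Matrix.unitaryGroup (Fin d) ℂ,
        (((Bm ρ U) ab.1 ab.1).re + ((Bm ρ U) ab.2 ab.2).re) ^ 2
          + 2 * Complex.normSq ((Bm ρ U) ab.1 ab.2)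
        = (qf (Bm ρ U) (pv ab.1 ab.2 w1 w1)).re ^ 2
          + (qf (Bm ρ U) (pv ab.1 ab.2 w1 w2)).re ^ 2
          + (qf (Bm ρ U) (pv ab.1 ab.2 w1 w3)).re ^ 2
          + (qf (Bm ρ U) (pv ab.1 ab.2 w1 w4)).re ^ 2 :=
      fun U => (four_point (Bm_psd hρ U) habne).symm
    rw [integral_congr_ae (ae_of_all _ hpt)]
    have hI1 := integrable_Q hρ htr ν (pv ab.1 ab.2 w1 w1)
    have hI2 := integrable_Q hρ htr ν (pv ab.1 ab.2 w1 w2)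
    have hI3 := integrable_Q hρ htr ν (pv ab.1 ab.2 w1 w3)
    have hI4 := integrable_Q hρ htr ν (pv ab.1 ab.2 w1 w4)
    have hI12 : Integrable (fun U => (qf (Bm ρ U) (pv ab.1 ab.2 w1 w1)).re ^ 2
        + (qf (Bm ρ U) (pv ab.1 ab.2 w1 w2)).re ^ 2) ν := hI1.add hI2
    have hI123 : Integrable (fun U => (qf (Bm ρ U) (pv ab.1 ab.2 w1 w1)).re ^ 2
        + (qf (Bm ρ U) (pv ab.1 ab.2 w1 w2)).re ^ 2
        + (qf (Bm ρ U) (pv ab.1 ab.2 w1 w3)).re ^ 2) ν := hI12.add hI3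
    rw [integral_add hI123 hI4, integral_add hI12 hI3, integral_add hI1 hI2]
    have hu : ∀ w : ℂ, Complex.normSq w = 1/2 →
        ∫ U, (qf (Bm ρ U) (pv ab.1 ab.2 w1 w)).re ^ 2 ∂ν = c := by
      intro w hw
      refine hQ _ ?_
      rw [pv_normSq_sum habne, hns1, hw]
      norm_num
    rw [hu w1 hns1, hu w2 hns2, hu w3 hns3, hu w4 hns4]
    ring
  have hIF : ∀ ab ∈ (Finset.univ : Finset (Fin d)).offDiag,
      Integrable (fun U => (((Bm ρ U) ab.1 ab.1).re + ((Bm ρ U) ab.2 ab.2).re) ^ 2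
        + 2 * Complex.normSq ((Bm ρ U) ab.1 ab.2)) ν := by
    intro ab hab
    have habne : ab.1 ≠ ab.2 := (Finset.mem_offDiag.mp hab).2.2
    have hI1 := integrable_Q hρ htr ν (pv ab.1 ab.2 w1 w1)
    have hI2 := integrable_Q hρ htr ν (pv ab.1 ab.2 w1 w2)
    have hI3 := integrable_Q hρ htr ν (pv ab.1 ab.2 w1 w3)
    have hI4 := integrable_Q hρ htr ν (pv ab.1 ab.2 w1 w4)
    refine (((hI1.add hI2).add hI3).add hI4).congr (ae_of_all _ (fun U => ?_))
    exact (four_point (Bm_psd hρ U) habne)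
  have hoffint : ∫ U, (∑ ab ∈ (Finset.univ : Finset (Fin d)).offDiag,
      ((((Bm ρ U) ab.1 ab.1).re + ((Bm ρ U) ab.2 ab.2).re) ^ 2
        + 2 * Complex.normSq ((Bm ρ U) ab.1 ab.2))) ∂ν
      = 4 * c * ((d:ℝ) * (d:ℝ) - (d:ℝ)) := by
    rw [integral_finset_sum _ hIF]
    rw [Finset.sum_congr rfl hFint, Finset.sum_const, nsmul_eq_mul, Finset.offDiag_card,
      Finset.card_univ, Fintype.card_fin]
    have hdd : (d:ℕ) ≤ d * d := Nat.le_mul_of_pos_left d hd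
    rw [Nat.cast_sub hdd]
    push_cast
    ring
  have hSI : Integrable (fun U => ∑ a, ((Bm ρ U) a a).re ^ 2) ν := by
    have hrw : (fun U => ∑ a, ((Bm ρ U) a a).re ^ 2)
        = fun U => ∑ a, (qf (Bm ρ U) (sv a 1)).re ^ 2 :=
      funext fun U => Finset.sum_congr rfl fun a _ => by rw [qf_basis]
    rw [hrw]
    exact integrable_finset_sum _ (fun a _ => integrable_Q hρ htr ν _)
  have hoffint2 : ∫ U, (∑ ab ∈ (Finset.univ : Finset (Fin d)).offDiag,
      ((((Bm ρ U) ab.1 ab.1).re + ((Bm ρ U) ab.2 ab.2).re) ^ 2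
        + 2 * Complex.normSq ((Bm ρ U) ab.1 ab.2))) ∂ν
      = 2 * ((d:ℝ) - 3) * ((d:ℝ) * c) + (2 + 2 * t) := by
    have hpt : ∀ U : Matrix.unitaryGroup (Fin d) ℂ,
        (∑ ab ∈ (Finset.univ : Finset (Fin d)).offDiag,
          ((((Bm ρ U) ab.1 ab.1).re + ((Bm ρ U) ab.2 ab.2).re) ^ 2
            + 2 * Complex.normSq ((Bm ρ U) ab.1 ab.2)))
        = 2 * ((d:ℝ) - 3) * (∑ a, ((Bm ρ U) a a).re ^ 2) + (2 + 2 * t) := by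
      intro U
      have h := offdiag_identity (Bm_psd hρ U) (Bm_trace htr U)
      rw [Bm_sq_trace] at h
      rw [h, htdef]
      ring
    rw [integral_congr_ae (ae_of_all _ hpt)]
    have hcm : Integrable (fun U => 2 * ((d:ℝ) - 3) * ∑ a, ((Bm ρ U) a a).re ^ 2) ν :=
      hSI.const_mul _
    rw [integral_add hcm (integrable_const _), integral_const_mul, hSint, integral_const]
    simp
  have heq : 4 * c * ((d:ℝ) * (d:ℝ) - (d:ℝ)) = 2 * ((d:ℝ) - 3) * ((d:ℝ) * c) + (2 + 2 * t) := by
    rw [← hoffint, hoffint2]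
  rw [hSint, eq_div_iff (by positivity : ((d:ℝ) + 1) ≠ 0)]
  linear_combination (1/2) * heq

end Stmt7Aux

/-- For a density matrix ρ and a Haar-random unitary U (formalized as a
left-invariant probability measure ν on the unitary group), measuring m i.i.d. samples
in the rotated basis, each outcome i having probability p_i(U) = (UρU†)_{ii}, the
collision estimator g̃ satisfies
E[g̃] = (m−1)(1 + Tr(ρ²)) / (m(d+1)), the expectation being over outcomes and U
(the inner expectation over outcomes is the finite sum over outcome tuples xs). -/
theorem stmt7 (d m : ℕ) (hd : 0 < d) (hm : 1 ≤ m)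
    (ν : Measure (Matrix.unitaryGroup (Fin d) ℂ)) [IsProbabilityMeasure ν]
    (hinv : ∀ V : Matrix.unitaryGroup (Fin d) ℂ, ν.map (fun U => V * U) = ν)
    (ρ : Matrix (Fin d) (Fin d) ℂ) (hρ : ρ.PosSemidef) (htr : ρ.trace = 1) :
    ∫ U, (∑ xs : Fin m → Fin d,
        (∏ j, (((U : Matrix (Fin d) (Fin d) ℂ) * ρ *
            (U : Matrix (Fin d) (Fin d) ℂ)ᴴ) (xs j) (xs j)).re) *
          ((1 : ℝ) / m ^ 2 *
            ∑ i : Fin d, (∑ j : Fin m, if xs j = i then (1 : ℝ) else 0) ^ 2 - 1 / m)) ∂ν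
      = ((m : ℝ) - 1) * (1 + ((ρ * ρ).trace).re) / (m * (d + 1)) := by
  have hpt : ∀ U : Matrix.unitaryGroup (Fin d) ℂ,
      (∑ xs : Fin m → Fin d,
        (∏ j, (((U : Matrix (Fin d) (Fin d) ℂ) * ρ *
            (U : Matrix (Fin d) (Fin d) ℂ)ᴴ) (xs j) (xs j)).re) *
          ((1 : ℝ) / m ^ 2 *
            ∑ i : Fin d, (∑ j : Fin m, if xs j = i then (1 : ℝ) else 0) ^ 2 - 1 / m))
      = ((m:ℝ) - 1)/m * ∑ i, ((Stmt7Aux.Bm ρ U) i i).re ^ 2 := fun U =>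
    Stmt7Aux.collision_sum hm (fun i => ((Stmt7Aux.Bm ρ U) i i).re)
      (Stmt7Aux.sum_diag_re (Stmt7Aux.Bm_trace htr U))
  rw [integral_congr_ae (ae_of_all _ hpt), integral_const_mul,
    Stmt7Aux.key hd ν hinv hρ htr, div_mul_div_comm]
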